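/- arXiv:0901.1404 — 4 statements merged into one kernel-verified Lean document; each statement's English description precedes it below -/
import Mathlib

section
/- Let ξ, η in SL(2,ℂ). If tr(ξηξ⁻¹η⁻¹) = 2, then the pair (ξ, η) acts reducibly on ℂ², i.e., there is a common eigenvector. Equivalently, if the span of {I, ξ, η, ξη} equals all of M₂(ℂ) (which forces irreducibility), then tr(ξηξ⁻¹η⁻¹) ≠ 2. -/
open Matrix

abbrev SL2C := Matrix.SpecialLinearGroup (Fin 2) ℂ

noncomputable def trC (g : SL2C) : ℂ := Matrix.trace (g : Matrix (Fin 2) (Fin 2) ℂ)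

private lemma trace_adj_identity (A B : Matrix (Fin 2) (Fin 2) ℂ) :
    Matrix.trace (A * B * A.adjugate * B.adjugate) =
      2 * A.det * B.det - (A * B - B * A).det := by
  simp [Matrix.adjugate_fin_two, Matrix.trace_fin_two, Matrix.det_fin_two, Matrix.mul_apply,
    Fin.sum_univ_two]
  ring

private lemma polarized_CH (X Y : Matrix (Fin 2) (Fin 2) ℂ) :
    X * Y + Y * X = (Matrix.trace (X * Y) - Matrix.trace X * Matrix.trace Y) • 1
      + Matrix.trace X • Y + Matrix.trace Y • X := by
  ext i j
  fin_cases i <;> fin_cases j <;>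
    simp [Matrix.mul_apply, Matrix.trace_fin_two, Fin.sum_univ_two, Matrix.one_apply] <;> ring

private lemma CH2 (X : Matrix (Fin 2) (Fin 2) ℂ) :
    X * X = Matrix.trace X • X - X.det • 1 := by
  ext i j
  fin_cases i <;> fin_cases j <;>
    simp [Matrix.mul_apply, Matrix.trace_fin_two, Matrix.det_fin_two, Fin.sum_univ_two,
      Matrix.one_apply] <;> ring

/-- kernel of a nonzero singular 2×2 matrix is one-dimensional -/
private lemma kernel_line (N : Matrix (Fin 2) (Fin 2) ℂ) (hN : N ≠ 0)
    (u v : Fin 2 → ℂ) (hu : N.mulVec u = 0) (hv : N.mulVec v = 0) (hv0 : v ≠ 0) :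
    ∃ t : ℂ, u = t • v := by
  have hu0 := congrFun hu 0
  have hu1 := congrFun hu 1
  have hv0' := congrFun hv 0
  have hv1 := congrFun hv 1
  simp [Matrix.mulVec, dotProduct, Fin.sum_univ_two] at hu0 hu1 hv0' hv1
  -- the cross determinant vanishes
  have k00 : N 0 0 * (u 0 * v 1 - u 1 * v 0) = 0 := by
    linear_combination v 1 * hu0 - u 1 * hv0'
  have k01 : N 0 1 * (u 0 * v 1 - u 1 * v 0) = 0 := by
    linear_combination u 0 * hv0' - v 0 * hu0
  have k10 : N 1 0 * (u 0 * v 1 - u 1 * v 0) = 0 := by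
    linear_combination v 1 * hu1 - u 1 * hv1
  have k11 : N 1 1 * (u 0 * v 1 - u 1 * v 0) = 0 := by
    linear_combination u 0 * hv1 - v 0 * hu1
  have cross : u 0 * v 1 - u 1 * v 0 = 0 := by
    by_contra hcr
    apply hN
    ext i j
    fin_cases i <;> fin_cases j
    · exact (mul_eq_zero.1 k00).resolve_right hcr
    · exact (mul_eq_zero.1 k01).resolve_right hcr
    · exact (mul_eq_zero.1 k10).resolve_right hcr
    · exact (mul_eq_zero.1 k11).resolve_right hcr
  have hvne : v 0 ≠ 0 ∨ v 1 ≠ 0 := by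
    by_contra hc
    push_neg at hc
    apply hv0
    funext i
    fin_cases i <;> simp [hc.1, hc.2]
  rcases hvne with h0 | h1
  · refine ⟨u 0 / v 0, ?_⟩
    funext i
    fin_cases i <;> simp only [Pi.smul_apply, smul_eq_mul]
    · simp only [Fin.zero_eta, Fin.mk_one, Fin.isValue]
      field_simp
    · simp only [Fin.zero_eta, Fin.mk_one, Fin.isValue]
      field_simp
      linear_combination -cross
  · refine ⟨u 1 / v 1, ?_⟩
    funext i
    fin_cases i <;> simp only [Pi.smul_apply, smul_eq_mul]
    · simp only [Fin.zero_eta, Fin.mk_one, Fin.isValue]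
      field_simp
      linear_combination cross
    · simp only [Fin.zero_eta, Fin.mk_one, Fin.isValue]
      field_simp

/-- every 2×2 complex matrix has an eigenvalue with singular shifted matrix -/
private lemma exists_eigenvalue (A : Matrix (Fin 2) (Fin 2) ℂ) :
    ∃ a : ℂ, (A - a • 1).det = 0 := by
  obtain ⟨s, hs⟩ := IsAlgClosed.exists_pow_nat_eq
    ((A 0 0 + A 1 1) ^ 2 - 4 * (A 0 0 * A 1 1 - A 0 1 * A 1 0)) (n := 2) (by norm_num)
  refine ⟨(A 0 0 + A 1 1 + s) / 2, ?_⟩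
  simp [Matrix.det_fin_two, Matrix.one_apply]
  ring_nf
  linear_combination (1/4 : ℂ) * hs

private lemma exists_eigenvector (A : Matrix (Fin 2) (Fin 2) ℂ) :
    ∃ (a : ℂ) (v : Fin 2 → ℂ), v ≠ 0 ∧ A.mulVec v = a • v ∧ (A - a • 1).det = 0 := by
  obtain ⟨a, ha⟩ := exists_eigenvalue A
  obtain ⟨v, hv0, hv⟩ := (Matrix.exists_mulVec_eq_zero_iff).2 ha
  refine ⟨a, v, hv0, ?_, ha⟩
  have := hv
  rw [Matrix.sub_mulVec, Matrix.smul_mulVec, Matrix.one_mulVec, sub_eq_zero] at this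
  exact this

private lemma nonzero_has_nonzero_col (M : Matrix (Fin 2) (Fin 2) ℂ) (hM : M ≠ 0) :
    ∃ u : Fin 2 → ℂ, M.mulVec u ≠ 0 := by
  by_contra hc
  push_neg at hc
  apply hM
  ext i j
  have := congrFun (hc (Pi.single j 1)) i
  simpa [Matrix.mulVec_single] using this

/-- main reducibility lemma -/
private lemma main_red (ξ η : SL2C) (h : trC (ξ * η * ξ⁻¹ * η⁻¹) = 2) :
    ∃ v : Fin 2 → ℂ, v ≠ 0 ∧
      (∃ a : ℂ, (ξ : Matrix (Fin 2) (Fin 2) ℂ).mulVec v = a • v) ∧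
      (∃ b : ℂ, (η : Matrix (Fin 2) (Fin 2) ℂ).mulVec v = b • v) := by
  set A : Matrix (Fin 2) (Fin 2) ℂ := (ξ : Matrix (Fin 2) (Fin 2) ℂ) with hA
  set B : Matrix (Fin 2) (Fin 2) ℂ := (η : Matrix (Fin 2) (Fin 2) ℂ) with hB
  have hdA : A.det = 1 := ξ.2
  have hdB : B.det = 1 := η.2
  set M : Matrix (Fin 2) (Fin 2) ℂ := A * B - B * A with hM
  -- trace of the commutator equals 2 - det M
  have htr : trC (ξ * η * ξ⁻¹ * η⁻¹) = 2 - M.det := by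
    have : trC (ξ * η * ξ⁻¹ * η⁻¹)
        = Matrix.trace (A * B * A.adjugate * B.adjugate) := by
      simp only [trC, Matrix.SpecialLinearGroup.coe_mul, Matrix.SpecialLinearGroup.coe_inv,
        hA, hB]
    rw [this, trace_adj_identity, hdA, hdB, hM]
    ring
  have hdM : M.det = 0 := by
    linear_combination htr - h
  have htrM : Matrix.trace M = 0 := by
    simp [hM, Matrix.trace_sub, Matrix.trace_mul_comm A B]
  by_cases hM0 : M = 0
  · -- A and B commute
    have hcomm : A * B = B * A := by
      have := hM0; rw [hM, sub_eq_zero] at this; exact this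
    obtain ⟨a, v, hv0, hav, hsing⟩ := exists_eigenvector A
    by_cases hN0 : A - a • 1 = 0
    · -- A is scalar
      have hAa : A = a • 1 := by rwa [sub_eq_zero] at hN0
      obtain ⟨b, w, hw0, hbw, _⟩ := exists_eigenvector B
      exact ⟨w, hw0, ⟨a, by rw [hAa, Matrix.smul_mulVec, Matrix.one_mulVec]⟩, ⟨b, hbw⟩⟩
    · -- eigenspace of A is a line preserved by B
      have hker_v : (A - a • 1).mulVec v = 0 := by
        rw [Matrix.sub_mulVec, Matrix.smul_mulVec, Matrix.one_mulVec, hav, sub_self]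
      have hker_Bv : (A - a • 1).mulVec (B.mulVec v) = 0 := by
        have hab : A.mulVec (B.mulVec v) = a • (B.mulVec v) := by
          rw [Matrix.mulVec_mulVec, hcomm, ← Matrix.mulVec_mulVec, hav, Matrix.mulVec_smul]
        rw [Matrix.sub_mulVec, Matrix.smul_mulVec, Matrix.one_mulVec, hab, sub_self]
      obtain ⟨b, hb⟩ := kernel_line (A - a • 1) hN0 (B.mulVec v) v hker_Bv hker_v hv0
      exact ⟨v, hv0, ⟨a, hav⟩, ⟨b, hb⟩⟩
  · -- M ≠ 0, M is nilpotent; pick v spanning its kernel = image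
    obtain ⟨u, hu⟩ := nonzero_has_nonzero_col M hM0
    set v : Fin 2 → ℂ := M.mulVec u with hv
    have hMsq : M * M = 0 := by
      rw [CH2, htrM, hdM]; simp
    have hMv : M.mulVec v = 0 := by
      rw [hv, Matrix.mulVec_mulVec, hMsq, Matrix.zero_mulVec]
    -- trace (M * X) = 0 for X = A, B
    have htrMA : Matrix.trace (M * A) = 0 := by
      rw [hM, sub_mul, Matrix.trace_sub, mul_assoc, Matrix.trace_mul_comm A (B * A),
        mul_assoc, sub_self]
    have htrMB : Matrix.trace (M * B) = 0 := by
      have h2 : Matrix.trace (B * A * B) = Matrix.trace (A * B * B) := by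
        rw [mul_assoc, Matrix.trace_mul_comm]
      rw [hM, sub_mul, Matrix.trace_sub, h2, sub_self]
    -- kernel of M is invariant: M (X v) = 0
    have key : ∀ X : Matrix (Fin 2) (Fin 2) ℂ, Matrix.trace (M * X) = 0 →
        M.mulVec (X.mulVec v) = 0 := by
      intro X hX
      have hpol := polarized_CH M X
      rw [htrM, hX] at hpol
      simp only [zero_sub, zero_mul, neg_zero, zero_smul, zero_add, add_zero] at hpol
      have hMX : M * X = Matrix.trace X • M - X * M := eq_sub_of_add_eq hpol
      rw [Matrix.mulVec_mulVec, hMX, Matrix.sub_mulVec, Matrix.smul_mulVec,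
        ← Matrix.mulVec_mulVec, hMv]
      simp
    have hv0 : v ≠ 0 := hu
    obtain ⟨a, ha⟩ := kernel_line M hM0 (A.mulVec v) v (key A htrMA) hMv hv0
    obtain ⟨b, hb⟩ := kernel_line M hM0 (B.mulVec v) v (key B htrMB) hMv hv0
    exact ⟨v, hv0, ⟨a, ha⟩, ⟨b, hb⟩⟩

theorem trace_comm_two_implies_reducible (ξ η : SL2C) :
    (trC (ξ * η * ξ⁻¹ * η⁻¹) = 2 →
      ∃ v : Fin 2 → ℂ, v ≠ 0 ∧
        (∃ a : ℂ, (ξ : Matrix (Fin 2) (Fin 2) ℂ).mulVec v = a • v) ∧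
        (∃ b : ℂ, (η : Matrix (Fin 2) (Fin 2) ℂ).mulVec v = b • v)) ∧
    (Submodule.span ℂ
        {(1 : Matrix (Fin 2) (Fin 2) ℂ), (ξ : Matrix (Fin 2) (Fin 2) ℂ),
          (η : Matrix (Fin 2) (Fin 2) ℂ),
          (ξ : Matrix (Fin 2) (Fin 2) ℂ) * (η : Matrix (Fin 2) (Fin 2) ℂ)} = ⊤ →
      trC (ξ * η * ξ⁻¹ * η⁻¹) ≠ 2) := by
  refine ⟨main_red ξ η, ?_⟩
  intro hspan h
  obtain ⟨v, hv0, ⟨a, ha⟩, ⟨b, hb⟩⟩ := main_red ξ η h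
  set A : Matrix (Fin 2) (Fin 2) ℂ := (ξ : Matrix (Fin 2) (Fin 2) ℂ)
  set B : Matrix (Fin 2) (Fin 2) ℂ := (η : Matrix (Fin 2) (Fin 2) ℂ)
  -- the submodule of matrices preserving the line spanned by v
  set W : Submodule ℂ (Matrix (Fin 2) (Fin 2) ℂ) :=
    { carrier := {X | ∃ c : ℂ, X.mulVec v = c • v}
      add_mem' := by
        rintro X Y ⟨c, hc⟩ ⟨d, hd⟩
        exact ⟨c + d, by rw [Matrix.add_mulVec, hc, hd, add_smul]⟩
      zero_mem' := ⟨0, by simp⟩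
      smul_mem' := by
        rintro r X ⟨c, hc⟩
        exact ⟨r * c, by rw [Matrix.smul_mulVec, hc, smul_smul]⟩ } with hW
  have hle : Submodule.span ℂ
      {(1 : Matrix (Fin 2) (Fin 2) ℂ), A, B, A * B} ≤ W := by
    rw [Submodule.span_le]
    rintro X hX
    simp only [Set.mem_insert_iff, Set.mem_singleton_iff] at hX
    rcases hX with rfl | rfl | rfl | rfl
    · exact ⟨1, by simp⟩
    · exact ⟨a, ha⟩
    · exact ⟨b, hb⟩
    · refine ⟨a * b, ?_⟩
      rw [← Matrix.mulVec_mulVec, hb, Matrix.mulVec_smul, ha, smul_smul, mul_comm]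
  rw [hspan] at hle
  -- find a matrix not in W
  have hvne : v 0 ≠ 0 ∨ (v 0 = 0 ∧ v 1 ≠ 0) := by
    by_cases h0 : v 0 = 0
    · refine Or.inr ⟨h0, ?_⟩
      intro h1
      exact hv0 (by funext i; fin_cases i <;> simp [h0, h1])
    · exact Or.inl h0
  rcases hvne with h0 | ⟨h0, h1⟩
  · obtain ⟨c, hc⟩ := hle (show (!![0,0;1,0] : Matrix (Fin 2) (Fin 2) ℂ) ∈ ⊤ from trivial)
    have hXv : (!![0,0;1,0] : Matrix (Fin 2) (Fin 2) ℂ).mulVec v = ![0, v 0] := by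
      funext i
      fin_cases i <;> simp [Matrix.mulVec, dotProduct, Fin.sum_univ_two]
    rw [hXv] at hc
    have e0 := congrFun hc 0
    have e1 := congrFun hc 1
    simp only [Matrix.cons_val_zero, Matrix.cons_val_one, Matrix.head_cons, Pi.smul_apply,
      smul_eq_mul] at e0 e1
    -- e0 : 0 = c * v 0, e1 : v 0 = c * v 1
    have hc0 : c = 0 := by
      rcases mul_eq_zero.1 e0.symm with h | h
      · exact h
      · exact absurd h h0
    rw [hc0, zero_mul] at e1
    exact h0 e1
  · obtain ⟨c, hc⟩ := hle (show (!![0,1;0,0] : Matrix (Fin 2) (Fin 2) ℂ) ∈ ⊤ from trivial)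
    have hXv : (!![0,1;0,0] : Matrix (Fin 2) (Fin 2) ℂ).mulVec v = ![v 1, 0] := by
      funext i
      fin_cases i <;> simp [Matrix.mulVec, dotProduct, Fin.sum_univ_two]
    rw [hXv] at hc
    have e0 := congrFun hc 0
    simp only [Matrix.cons_val_zero, Pi.smul_apply, smul_eq_mul] at e0
    -- e0 : v 1 = c * v 0
    rw [h0, mul_zero] at e0
    exact h1 e0
end

section
/- For any ξ, η, ζ in SL(2,ℂ) with t₁ = tr ξ, t₂ = tr η, t₃ = tr ζ, t₁₂ = tr(ξη), t₂₃ = tr(ηζ), t₁₃ = tr(ξζ), one has tr(ξηζ)·tr(ξζη) = (t₁² + t₂² + t₃²) + (t₁₂² + t₂₃² + t₁₃²) − (t₁t₂t₁₂ + t₂t₃t₂₃ + t₃t₁t₁₃) + t₁₂t₂₃t₁₃ − 4. -/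
open Matrix

theorem product_relation (ξ η ζ : SL2C) (t₁ t₂ t₃ t₁₂ t₂₃ t₁₃ : ℂ)
    (h1 : trC ξ = t₁) (h2 : trC η = t₂) (h3 : trC ζ = t₃)
    (h12 : trC (ξ * η) = t₁₂) (h23 : trC (η * ζ) = t₂₃) (h13 : trC (ξ * ζ) = t₁₃) :
    trC (ξ * η * ζ) * trC (ξ * ζ * η) =
      (t₁ ^ 2 + t₂ ^ 2 + t₃ ^ 2) + (t₁₂ ^ 2 + t₂₃ ^ 2 + t₁₃ ^ 2) -
        (t₁ * t₂ * t₁₂ + t₂ * t₃ * t₂₃ + t₃ * t₁ * t₁₃) + t₁₂ * t₂₃ * t₁₃ - 4 := by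
  subst h1 h2 h3 h12 h23 h13
  set a := (ξ : Matrix (Fin 2) (Fin 2) ℂ) 0 0 with ha
  set b := (ξ : Matrix (Fin 2) (Fin 2) ℂ) 0 1 with hb
  set c := (ξ : Matrix (Fin 2) (Fin 2) ℂ) 1 0 with hc
  set d := (ξ : Matrix (Fin 2) (Fin 2) ℂ) 1 1 with hd
  set e := (η : Matrix (Fin 2) (Fin 2) ℂ) 0 0 with he
  set f := (η : Matrix (Fin 2) (Fin 2) ℂ) 0 1 with hf
  set g := (η : Matrix (Fin 2) (Fin 2) ℂ) 1 0 with hg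
  set h := (η : Matrix (Fin 2) (Fin 2) ℂ) 1 1 with hh
  set p := (ζ : Matrix (Fin 2) (Fin 2) ℂ) 0 0 with hp
  set q := (ζ : Matrix (Fin 2) (Fin 2) ℂ) 0 1 with hq
  set r := (ζ : Matrix (Fin 2) (Fin 2) ℂ) 1 0 with hr
  set s := (ζ : Matrix (Fin 2) (Fin 2) ℂ) 1 1 with hs
  have dξ : a * d - b * c = 1 := by
    have := ξ.prop; rwa [Matrix.det_fin_two] at this
  have dη : e * h - f * g = 1 := by
    have := η.prop; rwa [Matrix.det_fin_two] at this
  have dζ : p * s - q * r = 1 := by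
    have := ζ.prop; rwa [Matrix.det_fin_two] at this
  simp only [trC, Matrix.trace_fin_two, Matrix.SpecialLinearGroup.coe_mul,
    Matrix.mul_apply, Fin.sum_univ_two]
  linear_combination
    ((-2) + e*f*p*r + (-1)*e*f*r*s + e*g*p*q + (-1)*e*g*q*s + 2*e*h*p*s + (-1)*e*h*p*p
      + (-1)*e*h*s*s + e*e + (-1)*e*e*p*s + (-1)*f*h*p*r + f*h*r*s + f*f*r*r
      + (-1)*g*h*p*q + g*h*q*s + g*g*q*q + h*h + (-1)*h*h*p*s + p*p + s*s) * dξ +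
    ((-2) + a*b*p*r + (-1)*a*b*r*s + a*c*p*q + (-1)*a*c*q*s + a*a + (-1)*a*a*p*s
      + 2*b*c*p*s + (-1)*b*c*p*p + (-1)*b*c*s*s + (-1)*b*d*p*r + b*d*r*s + b*b*r*r
      + (-1)*c*d*p*q + c*d*q*s + c*c*q*q + d*d + (-1)*d*d*p*s + 2*p*s) * dη +
    (a*b*e*g + (-1)*a*b*g*h + a*c*e*f + (-1)*a*c*f*h + (-1)*a*a*f*g + 2*b*c
      + (-1)*b*c*e*e + 2*b*c*f*g + (-1)*b*c*h*h + (-1)*b*d*e*g + b*d*g*h + b*b*g*g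
      + (-1)*c*d*e*f + c*d*f*h + c*c*f*f + (-1)*d*d*f*g + 2*f*g) * dζ
end

section
/- Suppose x, y, z ∈ ℝ satisfy x² + y² + z² − xyz < 4. Then either all of |x|, |y|, |z| are less than 2, or all of |x|, |y|, |z| are greater than 2. -/
theorem real_character_dichotomy (x y z : ℝ)
    (h : x ^ 2 + y ^ 2 + z ^ 2 - x * y * z < 4) :
    (|x| < 2 ∧ |y| < 2 ∧ |z| < 2) ∨ (|x| > 2 ∧ |y| > 2 ∧ |z| > 2) := by
  have hxy : (x ^ 2 - 4) * (y ^ 2 - 4) > 0 := by nlinarith [sq_nonneg (2 * z - x * y)]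
  have hyz : (y ^ 2 - 4) * (z ^ 2 - 4) > 0 := by nlinarith [sq_nonneg (2 * x - y * z)]
  rcases lt_or_gt_of_ne (fun hx : x ^ 2 - 4 = 0 => by rw [hx] at hxy; simp at hxy) with hx | hx
  · left
    have hy : y ^ 2 - 4 < 0 := by nlinarith
    have hz : z ^ 2 - 4 < 0 := by nlinarith
    exact ⟨abs_lt.2 ⟨by nlinarith, by nlinarith⟩,
      abs_lt.2 ⟨by nlinarith, by nlinarith⟩, abs_lt.2 ⟨by nlinarith, by nlinarith⟩⟩
  · right
    have hy : y ^ 2 - 4 > 0 := by nlinarith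
    have hz : z ^ 2 - 4 > 0 := by nlinarith
    refine ⟨?_, ?_, ?_⟩ <;> nlinarith [abs_nonneg x, abs_nonneg y, abs_nonneg z,
      sq_abs x, sq_abs y, sq_abs z]
end

section
/- Let X, Y ∈ SL(2,ℝ) with traces x = tr X, y = tr Y, z = tr(XY), and assume x, y, z < −2. Define X̂ = (2X − x·I)/√(x²−4) and Ŷ = (2Y − y·I)/√(y²−4). Then ½·tr(X̂Ŷ) = (2z − xy)/√((x²−4)(y²−4)), and this quantity is strictly less than −1. -/
open Matrix

abbrev SL2R := Matrix.SpecialLinearGroup (Fin 2) ℝ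

noncomputable def trR (g : SL2R) : ℝ := Matrix.trace (g : Matrix (Fin 2) (Fin 2) ℝ)

theorem reflections_inner_product (X Y : SL2R) (x y z : ℝ)
    (hx : trR X = x) (hy : trR Y = y) (hz : trR (X * Y) = z)
    (hx2 : x < -2) (hy2 : y < -2) (hz2 : z < -2)
    (Xhat Yhat : Matrix (Fin 2) (Fin 2) ℝ)
    (hXhat : Xhat = (Real.sqrt (x ^ 2 - 4))⁻¹ •
        (2 • (X : Matrix (Fin 2) (Fin 2) ℝ) - x • (1 : Matrix (Fin 2) (Fin 2) ℝ)))
    (hYhat : Yhat = (Real.sqrt (y ^ 2 - 4))⁻¹ •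
        (2 • (Y : Matrix (Fin 2) (Fin 2) ℝ) - y • (1 : Matrix (Fin 2) (Fin 2) ℝ))) :
    (1 / 2) * Matrix.trace (Xhat * Yhat) =
        (2 * z - x * y) / Real.sqrt ((x ^ 2 - 4) * (y ^ 2 - 4)) ∧
    (1 / 2) * Matrix.trace (Xhat * Yhat) < -1 := by
  have ha : (0:ℝ) < x ^ 2 - 4 := by nlinarith
  have hb : (0:ℝ) < y ^ 2 - 4 := by nlinarith
  have hsa : Real.sqrt (x ^ 2 - 4) > 0 := Real.sqrt_pos.2 ha
  have hsb : Real.sqrt (y ^ 2 - 4) > 0 := Real.sqrt_pos.2 hb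
  have hsab : Real.sqrt ((x ^ 2 - 4) * (y ^ 2 - 4)) = Real.sqrt (x ^ 2 - 4) * Real.sqrt (y ^ 2 - 4) :=
    Real.sqrt_mul ha.le _
  have htrace : Matrix.trace (Xhat * Yhat) =
      (Real.sqrt (x ^ 2 - 4))⁻¹ * (Real.sqrt (y ^ 2 - 4))⁻¹ * (4 * z - 2 * (x * y)) := by
    subst hXhat hYhat
    have hzz : Matrix.trace ((X : Matrix (Fin 2) (Fin 2) ℝ) * (Y : Matrix (Fin 2) (Fin 2) ℝ)) = z := by
      rw [← hz]; rfl
    rw [Matrix.smul_mul, Matrix.mul_smul, sub_mul, mul_sub, mul_sub]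
    simp only [Matrix.smul_mul, Matrix.mul_smul, smul_smul, trace_smul, trace_sub,
      Matrix.one_mul, Matrix.mul_one, hzz]
    rw [show Matrix.trace (X : Matrix (Fin 2) (Fin 2) ℝ) = x from hx,
        show Matrix.trace (Y : Matrix (Fin 2) (Fin 2) ℝ) = y from hy]
    simp only [smul_eq_mul, nsmul_eq_mul, Nat.cast_ofNat, Matrix.trace_one, Fintype.card_fin]
    ring
  have heq : (1 / 2) * Matrix.trace (Xhat * Yhat) =
      (2 * z - x * y) / Real.sqrt ((x ^ 2 - 4) * (y ^ 2 - 4)) := by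
    rw [htrace, hsab]
    field_simp
    ring
  refine ⟨heq, ?_⟩
  rw [heq]
  rw [div_lt_iff₀ (by rw [hsab]; positivity)]
  have hxy : x * y + 4 > 0 := by nlinarith
  have hlt : Real.sqrt ((x ^ 2 - 4) * (y ^ 2 - 4)) < x * y + 4 := by
    rw [show x*y+4 = Real.sqrt ((x*y+4)^2) by rw [Real.sqrt_sq hxy.le]]
    apply Real.sqrt_lt_sqrt (by positivity)
    nlinarith [sq_nonneg (x + y)]
  nlinarith
end
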